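/- Let C ⊂ int(M) be a closed connected nowhere dense subset of a surface M (or more generally a topological space M that is a connected manifold) whose complement has exactly two components U₁ and U₂. Set C' = fr(U₁) ∩ fr(U₂). Then C' ⊆ C is closed, M \ C' has exactly two components V₁ ⊇ U₁ and V₂ ⊇ U₂, fr(V₁) = fr(V₂) = C', each Vᵢ equals the interior of its closure, and Uᵢ is dense in Vᵢ. -/
import Mathlib


/-- Trimming lemma: if `C` is a closed, connected, nowhere dense subset of a connected
(locally connected) manifold `M` whose complement has exactly two components `U₁, U₂`,
then `C' = fr(U₁) ∩ fr(U₂)` is a closed subset of `C` and `M \ C'` has exactly two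
components `V₁ ⊇ U₁` and `V₂ ⊇ U₂`, each with frontier `C'`, each equal to the interior
of its closure, and `Uᵢ` is dense in `Vᵢ`. -/
theorem stmt_18 {M : Type*} [TopologicalSpace M] [ConnectedSpace M]
    [LocallyConnectedSpace M]
    (C : Set M) (hCclosed : IsClosed C) (hCconn : IsConnected C)
    (hCnwd : interior C = ∅)
    (U₁ U₂ : Set M) (hU₁ : IsOpen U₁) (hU₂ : IsOpen U₂)
    (hU₁conn : IsConnected U₁) (hU₂conn : IsConnected U₂)
    (hdisj : Disjoint U₁ U₂) (hcompl : U₁ ∪ U₂ = Cᶜ) :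
    frontier U₁ ∩ frontier U₂ ⊆ C ∧
      IsClosed (frontier U₁ ∩ frontier U₂) ∧
      ∃ V₁ V₂ : Set M,
        U₁ ⊆ V₁ ∧ U₂ ⊆ V₂ ∧
        IsOpen V₁ ∧ IsOpen V₂ ∧
        IsConnected V₁ ∧ IsConnected V₂ ∧
        Disjoint V₁ V₂ ∧
        V₁ ∪ V₂ = (frontier U₁ ∩ frontier U₂)ᶜ ∧
        frontier V₁ = frontier U₁ ∩ frontier U₂ ∧
        frontier V₂ = frontier U₁ ∩ frontier U₂ ∧
        V₁ = interior (closure V₁) ∧ V₂ = interior (closure V₂) ∧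
        V₁ ⊆ closure U₁ ∧ V₂ ⊆ closure U₂ := by
  have h12 : Disjoint U₁ (closure U₂) := hdisj.closure_right hU₁
  have h21 : Disjoint U₂ (closure U₁) := hdisj.symm.closure_right hU₂
  have hdense : closure U₁ ∪ closure U₂ = Set.univ := by
    rw [← closure_union, hcompl, closure_compl, hCnwd, Set.compl_empty]
  -- frontier U₁ ∩ frontier U₂ = closure U₁ ∩ closure U₂
  have hfr : frontier U₁ ∩ frontier U₂ = closure U₁ ∩ closure U₂ := by
    rw [hU₁.frontier_eq, hU₂.frontier_eq]
    ext x
    simp only [Set.mem_inter_iff, Set.mem_diff]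
    constructor
    · rintro ⟨⟨h1, _⟩, ⟨h2, _⟩⟩; exact ⟨h1, h2⟩
    · rintro ⟨h1, h2⟩
      exact ⟨⟨h1, fun hx => h12.le_bot ⟨hx, h2⟩⟩, ⟨h2, fun hx => h21.le_bot ⟨hx, h1⟩⟩⟩
  have hsubC : frontier U₁ ∩ frontier U₂ ⊆ C := by
    rw [hfr]
    intro x ⟨h1, h2⟩
    by_contra hxC
    have : x ∈ U₁ ∪ U₂ := by rw [hcompl]; exact hxC
    rcases this with hx | hx
    · exact h12.le_bot ⟨hx, h2⟩
    · exact h21.le_bot ⟨hx, h1⟩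
  refine ⟨hsubC, isClosed_frontier.inter isClosed_frontier, (closure U₂)ᶜ, (closure U₁)ᶜ,
    ?_, ?_, isClosed_closure.isOpen_compl, isClosed_closure.isOpen_compl,
    ?_, ?_, ?_, ?_, ?_, ?_, ?_, ?_, ?_, ?_⟩
  · exact Set.subset_compl_iff_disjoint_right.mpr h12
  · exact Set.subset_compl_iff_disjoint_right.mpr h21
  all_goals
    have hV1sub : (closure U₂)ᶜ ⊆ closure U₁ := by
      intro x hx
      rcases (hdense ▸ Set.mem_univ x : x ∈ closure U₁ ∪ closure U₂) with h | h
      · exact h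
      · exact absurd h hx
    have hV2sub : (closure U₁)ᶜ ⊆ closure U₂ := by
      intro x hx
      rcases (hdense ▸ Set.mem_univ x : x ∈ closure U₁ ∪ closure U₂) with h | h
      · exact absurd h hx
      · exact h
    have hU1V : U₁ ⊆ (closure U₂)ᶜ := Set.subset_compl_iff_disjoint_right.mpr h12
    have hU2V : U₂ ⊆ (closure U₁)ᶜ := Set.subset_compl_iff_disjoint_right.mpr h21
    have hclV1 : closure ((closure U₂)ᶜ) = closure U₁ :=
      Set.Subset.antisymm (closure_minimal hV1sub isClosed_closure)
        (closure_mono hU1V)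
    have hclV2 : closure ((closure U₁)ᶜ) = closure U₂ :=
      Set.Subset.antisymm (closure_minimal hV2sub isClosed_closure)
        (closure_mono hU2V)
    have hintcl1 : interior (closure U₁) = (closure U₂)ᶜ := by
      apply Set.Subset.antisymm
      · intro x hx
        intro hx2
        have hne : (interior (closure U₁) ∩ U₂).Nonempty := by
          have := mem_closure_iff.mp hx2 _ isOpen_interior hx
          exact this
        rcases hne with ⟨y, hy1, hy2⟩
        exact h21.le_bot ⟨hy2, interior_subset hy1⟩
      · exact interior_maximal hV1sub isClosed_closure.isOpen_compl
    have hintcl2 : interior (closure U₂) = (closure U₁)ᶜ := by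
      apply Set.Subset.antisymm
      · intro x hx
        intro hx2
        have hne : (interior (closure U₂) ∩ U₁).Nonempty := by
          have := mem_closure_iff.mp hx2 _ isOpen_interior hx
          exact this
        rcases hne with ⟨y, hy1, hy2⟩
        exact h12.le_bot ⟨hy2, interior_subset hy1⟩
      · exact interior_maximal hV2sub isClosed_closure.isOpen_compl
  · -- IsConnected V₁
    exact ⟨hU₁conn.nonempty.mono hU1V,
      hU₁conn.isPreconnected.subset_closure hU1V hV1sub⟩
  · exact ⟨hU₂conn.nonempty.mono hU2V,
      hU₂conn.isPreconnected.subset_closure hU2V hV2sub⟩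
  · -- Disjoint
    rw [Set.disjoint_iff_inter_eq_empty, ← Set.compl_union, Set.union_comm, hdense,
      Set.compl_univ]
  · -- union
    rw [hfr, Set.compl_inter, Set.union_comm]
  · -- frontier V₁
    rw [isClosed_closure.isOpen_compl.frontier_eq, hclV1, Set.diff_compl, hfr]
  · -- frontier V₂
    rw [isClosed_closure.isOpen_compl.frontier_eq, hclV2, Set.diff_compl, hfr,
      Set.inter_comm]
  · rw [hclV1, hintcl1]
  · rw [hclV2, hintcl2]
  · exact hV1sub
  · exact hV2sub
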